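/- arXiv:2306.11224 — 13 statements merged into one kernel-verified Lean document; each statement's English description precedes it below -/
import Mathlib

section
/- Weak duality for the PTE program: for any τ : ℝ, any TSP-feasible triple (π, Q, P) and any TGP-feasible pair (v, u) for τ satisfy τ * (∑ i, Q i + ∑ r, P r) ≤ ∑ i, v i * x o i - ∑ r, u r * y o r, i.e., the primal (total slack price) objective never exceeds the dual (total gap price) objective. -/
open Finset

/-- TSP-feasibility: `π, Q, P` nonnegative, input constraints
`(∑ j, x j i * π j) + Q i * x o i = x o i`, and output constraints
`∑ j, y j r * π j = (1 + P r) * y o r`. -/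
def TSPFeasible {n m s : ℕ} (x : Fin n → Fin m → ℝ) (y : Fin n → Fin s → ℝ)
    (o : Fin n) (π : Fin n → ℝ) (Q : Fin m → ℝ) (P : Fin s → ℝ) : Prop :=
  (∀ j, 0 ≤ π j) ∧ (∀ i, 0 ≤ Q i) ∧ (∀ r, 0 ≤ P r) ∧
  (∀ i, (∑ j, x j i * π j) + Q i * x o i = x o i) ∧
  (∀ r, ∑ j, y j r * π j = (1 + P r) * y o r)

/-- TGP-feasibility for `τ`: nonnegative virtual gap for every unit `j`,
and each virtual price of unit `o` bounded below by `τ`. -/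
def TGPFeasible {n m s : ℕ} (x : Fin n → Fin m → ℝ) (y : Fin n → Fin s → ℝ)
    (o : Fin n) (τ : ℝ) (v : Fin m → ℝ) (u : Fin s → ℝ) : Prop :=
  (∀ j, 0 ≤ ∑ i, v i * x j i - ∑ r, u r * y j r) ∧
  (∀ i, τ ≤ x o i * v i) ∧ (∀ r, τ ≤ y o r * u r)

/-- Weak duality for the PTE program. -/
theorem pte_weak_duality
    (n m s : ℕ) (x : Fin n → Fin m → ℝ) (y : Fin n → Fin s → ℝ) (o : Fin n)
    (hx : ∀ j i, 0 < x j i) (hy : ∀ j r, 0 < y j r)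
    (τ : ℝ) (π : Fin n → ℝ) (Q : Fin m → ℝ) (P : Fin s → ℝ)
    (v : Fin m → ℝ) (u : Fin s → ℝ)
    (hTSP : TSPFeasible x y o π Q P) (hTGP : TGPFeasible x y o τ v u) :
    τ * (∑ i, Q i + ∑ r, P r) ≤ ∑ i, v i * x o i - ∑ r, u r * y o r := by
  obtain ⟨hπ, hQ, hP, hin, hout⟩ := hTSP
  obtain ⟨hgap, hv, hu⟩ := hTGP
  have h1 : ∑ i, v i * x o i
      = (∑ j, π j * ∑ i, v i * x j i) + ∑ i, Q i * (x o i * v i) := by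
    have e1 : ∀ i, v i * x o i
        = (∑ j, v i * (x j i * π j)) + Q i * (x o i * v i) := fun i => by
      rw [← Finset.mul_sum]; linear_combination (-(v i)) * (hin i)
    rw [Finset.sum_congr rfl fun i _ => e1 i, Finset.sum_add_distrib,
      Finset.sum_comm]
    congr 1
    refine Finset.sum_congr rfl fun j _ => ?_
    rw [Finset.mul_sum]
    exact Finset.sum_congr rfl fun i _ => by ring
  have h2 : ∑ r, u r * y o r
      = (∑ j, π j * ∑ r, u r * y j r) - ∑ r, P r * (y o r * u r) := by
    have e2 : ∀ r, u r * y o r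
        = (∑ j, u r * (y j r * π j)) - P r * (y o r * u r) := fun r => by
      rw [← Finset.mul_sum]; linear_combination (-(u r)) * (hout r)
    rw [Finset.sum_congr rfl fun r _ => e2 r, Finset.sum_sub_distrib,
      Finset.sum_comm]
    congr 1
    refine Finset.sum_congr rfl fun j _ => ?_
    rw [Finset.mul_sum]
    exact Finset.sum_congr rfl fun r _ => by ring
  have key : ∑ i, v i * x o i - ∑ r, u r * y o r
      = (∑ j, π j * (∑ i, v i * x j i - ∑ r, u r * y j r))
        + (∑ i, Q i * (x o i * v i) + ∑ r, P r * (y o r * u r)) := by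
    rw [h1, h2]
    rw [Finset.sum_congr rfl fun j (_ : j ∈ Finset.univ) =>
      (mul_sub (π j) (∑ i, v i * x j i) (∑ r, u r * y j r)),
      Finset.sum_sub_distrib]
    ring
  rw [key, mul_add]
  have hnn : 0 ≤ ∑ j, π j * (∑ i, v i * x j i - ∑ r, u r * y j r) :=
    Finset.sum_nonneg fun j _ => mul_nonneg (hπ j) (hgap j)
  have hQb : τ * ∑ i, Q i ≤ ∑ i, Q i * (x o i * v i) := by
    rw [Finset.mul_sum]
    exact Finset.sum_le_sum fun i _ => by
      rw [mul_comm τ (Q i)]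
      exact mul_le_mul_of_nonneg_left (hv i) (hQ i)
  have hPb : τ * ∑ r, P r ≤ ∑ r, P r * (y o r * u r) := by
    rw [Finset.mul_sum]
    exact Finset.sum_le_sum fun r _ => by
      rw [mul_comm τ (P r)]
      exact mul_le_mul_of_nonneg_left (hu r) (hP r)
  linarith
end

section
/- The relative efficiency is between 0 and 1 (Criterion (i)): if m ≥ 1, s ≥ 1, τ > 0, and (v, u) is TGP-feasible for τ, then 0 < (∑ r, u r * y o r) / (∑ i, v i * x o i) ≤ 1. -/
open Finset

/-- The relative efficiency is between 0 and 1 (Criterion (i)). -/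
theorem relative_efficiency_in_unit_interval
    (n m s : ℕ) (x : Fin n → Fin m → ℝ) (y : Fin n → Fin s → ℝ) (o : Fin n)
    (hx : ∀ j i, 0 < x j i) (hy : ∀ j r, 0 < y j r)
    (hm : 1 ≤ m) (hs : 1 ≤ s)
    (τ : ℝ) (hτ : 0 < τ) (v : Fin m → ℝ) (u : Fin s → ℝ)
    (hTGP : TGPFeasible x y o τ v u) :
    0 < (∑ r, u r * y o r) / (∑ i, v i * x o i) ∧
      (∑ r, u r * y o r) / (∑ i, v i * x o i) ≤ 1 := by
  obtain ⟨hgap, hv, hu⟩ := hTGP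
  have hnum : 0 < ∑ r, u r * y o r := by
    apply Finset.sum_pos
    · intro r _
      have := hu r; linarith [hτ, mul_comm (y o r) (u r)]
    · exact Finset.univ_nonempty_iff.mpr (Fin.pos_iff_nonempty.mp (by omega))
  have hden : 0 < ∑ i, v i * x o i := by
    apply Finset.sum_pos
    · intro i _
      have := hv i; linarith [hτ, mul_comm (x o i) (v i)]
    · exact Finset.univ_nonempty_iff.mpr (Fin.pos_iff_nonempty.mp (by omega))
  have hle : ∑ r, u r * y o r ≤ ∑ i, v i * x o i := by
    have := hgap o; linarith
  exact ⟨div_pos hnum hden, (div_le_one hden).mpr hle⟩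
end

section
/- Bounds on the normalized relative inefficiency: if s ≥ 1, τ > 0, and (v, u) is TGP-feasible for τ with the normalization ∑ i, v i * x o i = 1, then 0 ≤ ∑ i, v i * x o i - ∑ r, u r * y o r ≤ 1 - s * τ < 1. -/
open Finset

/-- Bounds on the normalized relative inefficiency. -/
theorem normalized_inefficiency_bounds
    (n m s : ℕ) (x : Fin n → Fin m → ℝ) (y : Fin n → Fin s → ℝ) (o : Fin n)
    (hx : ∀ j i, 0 < x j i) (hy : ∀ j r, 0 < y j r)
    (hs : 1 ≤ s)
    (τ : ℝ) (hτ : 0 < τ) (v : Fin m → ℝ) (u : Fin s → ℝ)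
    (hTGP : TGPFeasible x y o τ v u)
    (hnorm : ∑ i, v i * x o i = 1) :
    0 ≤ ∑ i, v i * x o i - ∑ r, u r * y o r ∧
      ∑ i, v i * x o i - ∑ r, u r * y o r ≤ 1 - (s : ℝ) * τ ∧
      1 - (s : ℝ) * τ < 1 := by
  obtain ⟨h1, h2, h3⟩ := hTGP
  refine ⟨h1 o, ?_, ?_⟩
  · have hsum : (s : ℝ) * τ ≤ ∑ r, u r * y o r := by
      calc (s : ℝ) * τ = ∑ _r : Fin s, τ := by simp [mul_comm]
        _ ≤ ∑ r, u r * y o r :=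
          Finset.sum_le_sum fun r _ => by have := h3 r; linarith [this]
    linarith [hnorm, hsum]
  · have : 0 < (s : ℝ) * τ := by positivity
    linarith
end

section
/- Step II normalization (Eq. (5)): if m ≥ 1 and (v, u) minimizes Δ over TGP-feasible pairs for τ = 1, then α := ∑ i, v i * x o i satisfies α ≥ m > 0, and (α⁻¹ • v, α⁻¹ • u) minimizes Δ over TGP-feasible pairs for τ = α⁻¹ and satisfies the normalization ∑ i, (α⁻¹ * v i) * x o i = 1. -/
open Finset

/-- Step II normalization (Eq. (5)). -/
theorem step_two_normalization
    (n m s : ℕ) (x : Fin n → Fin m → ℝ) (y : Fin n → Fin s → ℝ) (o : Fin n)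
    (hx : ∀ j i, 0 < x j i) (hy : ∀ j r, 0 < y j r)
    (hm : 1 ≤ m)
    (v : Fin m → ℝ) (u : Fin s → ℝ)
    (hfeas : TGPFeasible x y o 1 v u)
    (hmin : ∀ v' u', TGPFeasible x y o 1 v' u' →
      ∑ i, v i * x o i - ∑ r, u r * y o r ≤ ∑ i, v' i * x o i - ∑ r, u' r * y o r)
    (α : ℝ) (hα : α = ∑ i, v i * x o i) :
    (m : ℝ) ≤ α ∧ (0 : ℝ) < (m : ℝ) ∧
    TGPFeasible x y o α⁻¹ (α⁻¹ • v) (α⁻¹ • u) ∧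
    (∀ v' u', TGPFeasible x y o α⁻¹ v' u' →
      ∑ i, (α⁻¹ • v) i * x o i - ∑ r, (α⁻¹ • u) r * y o r
        ≤ ∑ i, v' i * x o i - ∑ r, u' r * y o r) ∧
    ∑ i, (α⁻¹ * v i) * x o i = 1 := by

  obtain ⟨h1, h2, h3⟩ := hfeas
  have hmα : (m : ℝ) ≤ α := by
    rw [hα]
    calc (m : ℝ) = ∑ _i : Fin m, (1 : ℝ) := by simp
    _ ≤ ∑ i, v i * x o i := by
        apply Finset.sum_le_sum
        intro i _
        have := h2 i
        linarith [this, mul_comm (x o i) (v i)]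
  have hm1 : (1 : ℝ) ≤ (m : ℝ) := by exact_mod_cast hm
  have hαpos : 0 < α := lt_of_lt_of_le (by linarith) hmα
  have hα1 : (1:ℝ) ≤ α := le_trans hm1 hmα
  have hαinv : 0 < α⁻¹ := inv_pos.mpr hαpos
  refine ⟨hmα, by exact_mod_cast Nat.lt_of_lt_of_le Nat.zero_lt_one hm, ?_, ?_, ?_⟩
  · refine ⟨fun j => ?_, fun i => ?_, fun r => ?_⟩
    · have := h1 j
      have : 0 ≤ α⁻¹ * (∑ i, v i * x j i - ∑ r, u r * y j r) :=
        mul_nonneg (le_of_lt hαinv) this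
      calc (0:ℝ) ≤ α⁻¹ * (∑ i, v i * x j i - ∑ r, u r * y j r) := this
      _ = ∑ i, (α⁻¹ • v) i * x j i - ∑ r, (α⁻¹ • u) r * y j r := by
          simp [Finset.mul_sum, mul_sub, mul_assoc]
    · have := h2 i
      have : α⁻¹ * 1 ≤ α⁻¹ * (x o i * v i) := by
        exact mul_le_mul_of_nonneg_left this (le_of_lt hαinv)
      simp only [Pi.smul_apply, smul_eq_mul]
      calc α⁻¹ = α⁻¹ * 1 := by ring
      _ ≤ α⁻¹ * (x o i * v i) := this
      _ = x o i * (α⁻¹ * v i) := by ring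
    · have := h3 r
      have : α⁻¹ * 1 ≤ α⁻¹ * (y o r * u r) := by
        exact mul_le_mul_of_nonneg_left this (le_of_lt hαinv)
      simp only [Pi.smul_apply, smul_eq_mul]
      calc α⁻¹ = α⁻¹ * 1 := by ring
      _ ≤ α⁻¹ * (y o r * u r) := this
      _ = y o r * (α⁻¹ * u r) := by ring
  · intro v' u' ⟨h1', h2', h3'⟩
    have hfeas' : TGPFeasible x y o 1 (α • v') (α • u') := by
      refine ⟨fun j => ?_, fun i => ?_, fun r => ?_⟩
      · have := h1' j
        have h0 : 0 ≤ α * (∑ i, v' i * x j i - ∑ r, u' r * y j r) :=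
          mul_nonneg (le_of_lt hαpos) this
        calc (0:ℝ) ≤ α * (∑ i, v' i * x j i - ∑ r, u' r * y j r) := h0
        _ = ∑ i, (α • v') i * x j i - ∑ r, (α • u') r * y j r := by
            simp [Finset.mul_sum, mul_sub, mul_assoc]
      · have := h2' i
        have h0 : α * α⁻¹ ≤ α * (x o i * v' i) :=
          mul_le_mul_of_nonneg_left this (le_of_lt hαpos)
        rw [mul_inv_cancel₀ (ne_of_gt hαpos)] at h0
        simp only [Pi.smul_apply, smul_eq_mul]
        calc (1:ℝ) ≤ α * (x o i * v' i) := h0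
        _ = x o i * (α * v' i) := by ring
      · have := h3' r
        have h0 : α * α⁻¹ ≤ α * (y o r * u' r) :=
          mul_le_mul_of_nonneg_left this (le_of_lt hαpos)
        rw [mul_inv_cancel₀ (ne_of_gt hαpos)] at h0
        simp only [Pi.smul_apply, smul_eq_mul]
        calc (1:ℝ) ≤ α * (y o r * u' r) := h0
        _ = y o r * (α * u' r) := by ring
    have key := hmin (α • v') (α • u') hfeas'
    have e1 : ∑ i, (α • v') i * x o i - ∑ r, (α • u') r * y o r
        = α * (∑ i, v' i * x o i - ∑ r, u' r * y o r) := by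
      simp [Finset.mul_sum, mul_sub, mul_assoc]
    rw [e1] at key
    have e2 : ∑ i, (α⁻¹ • v) i * x o i - ∑ r, (α⁻¹ • u) r * y o r
        = α⁻¹ * (∑ i, v i * x o i - ∑ r, u r * y o r) := by
      simp [Finset.mul_sum, mul_sub, mul_assoc]
    rw [e2]
    have := mul_le_mul_of_nonneg_left key (le_of_lt hαinv)
    rw [← mul_assoc, inv_mul_cancel₀ (ne_of_gt hαpos), one_mul] at this
    exact this
  · have : ∑ i, α⁻¹ * v i * x o i = α⁻¹ * ∑ i, v i * x o i := by
      simp [Finset.mul_sum, mul_assoc]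
    rw [this, ← hα, inv_mul_cancel₀ (ne_of_gt hαpos)]
end

section
/- Optimality certificate via equal objective values: if (π, Q, P) is TSP-feasible, (v, u) is TGP-feasible for τ, and τ * (∑ i, Q i + ∑ r, P r) = ∑ i, v i * x o i - ∑ r, u r * y o r, then every TSP-feasible triple (π', Q', P') satisfies τ * (∑ i, Q' i + ∑ r, P' r) ≤ τ * (∑ i, Q i + ∑ r, P r), and every TGP-feasible pair (v', u') for τ satisfies ∑ i, v' i * x o i - ∑ r, u' r * y o r ≥ ∑ i, v i * x o i - ∑ r, u r * y o r. -/
open Finset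

theorem weak_duality
    {n m s : ℕ} {x : Fin n → Fin m → ℝ} {y : Fin n → Fin s → ℝ} {o : Fin n}
    {τ : ℝ} {π : Fin n → ℝ} {Q : Fin m → ℝ} {P : Fin s → ℝ}
    {v : Fin m → ℝ} {u : Fin s → ℝ}
    (hTSP : TSPFeasible x y o π Q P) (hTGP : TGPFeasible x y o τ v u) :
    τ * (∑ i, Q i + ∑ r, P r) ≤ ∑ i, v i * x o i - ∑ r, u r * y o r := by
  obtain ⟨hπ, hQ, hP, hin, hout⟩ := hTSP
  obtain ⟨hgap, hv, hu⟩ := hTGP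
  have H1 : ∑ i, v i * ((∑ j, x j i * π j) + Q i * x o i) = ∑ i, v i * x o i := by
    simp only [hin]
  have H2 : ∑ r, u r * (∑ j, y j r * π j) = ∑ r, u r * ((1 + P r) * y o r) := by
    simp only [hout]
  have key : ∑ i, Q i * (x o i * v i) + ∑ r, P r * (y o r * u r)
      = (∑ i, v i * x o i - ∑ r, u r * y o r)
        - ∑ j, π j * (∑ i, v i * x j i - ∑ r, u r * y j r) := by
    have swap1 : ∑ i, ∑ j, v i * (x j i * π j) = ∑ j, ∑ i, v i * (x j i * π j) :=
      Finset.sum_comm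
    have swap2 : ∑ r, ∑ j, u r * (y j r * π j) = ∑ j, ∑ r, u r * (y j r * π j) :=
      Finset.sum_comm
    simp only [mul_add, add_mul, one_mul, mul_sub, Finset.mul_sum, Finset.sum_add_distrib,
      Finset.sum_sub_distrib] at H1 H2 ⊢
    rw [swap1] at H1
    rw [swap2] at H2
    have e1 : ∑ j, ∑ i, π j * (v i * x j i) = ∑ j, ∑ i, v i * (x j i * π j) := by
      congr 1; ext j; congr 1; ext i; ring
    have e2 : ∑ j, ∑ r, π j * (u r * y j r) = ∑ j, ∑ r, u r * (y j r * π j) := by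
      congr 1; ext j; congr 1; ext r; ring
    have e3 : ∑ i, Q i * (x o i * v i) = ∑ i, v i * (Q i * x o i) := by
      congr 1; ext i; ring
    have e4 : ∑ r, P r * (y o r * u r) = ∑ r, u r * (P r * y o r) := by
      congr 1; ext r; ring
    rw [e1, e2, e3, e4]
    linarith
  have h1 : τ * (∑ i, Q i + ∑ r, P r)
      ≤ ∑ i, Q i * (x o i * v i) + ∑ r, P r * (y o r * u r) := by
    rw [mul_add, Finset.mul_sum, Finset.mul_sum]
    refine add_le_add (Finset.sum_le_sum fun i _ => ?_) (Finset.sum_le_sum fun r _ => ?_)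
    · calc τ * Q i = Q i * τ := by ring
        _ ≤ Q i * (x o i * v i) := mul_le_mul_of_nonneg_left (hv i) (hQ i)
    · calc τ * P r = P r * τ := by ring
        _ ≤ P r * (y o r * u r) := mul_le_mul_of_nonneg_left (hu r) (hP r)
  have h2 : 0 ≤ ∑ j, π j * (∑ i, v i * x j i - ∑ r, u r * y j r) :=
    Finset.sum_nonneg fun j _ => mul_nonneg (hπ j) (hgap j)
  linarith [key]

/-- Optimality certificate via equal objective values. -/
theorem optimality_certificate
    (n m s : ℕ) (x : Fin n → Fin m → ℝ) (y : Fin n → Fin s → ℝ) (o : Fin n)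
    (hx : ∀ j i, 0 < x j i) (hy : ∀ j r, 0 < y j r)
    (τ : ℝ) (π : Fin n → ℝ) (Q : Fin m → ℝ) (P : Fin s → ℝ)
    (v : Fin m → ℝ) (u : Fin s → ℝ)
    (hTSP : TSPFeasible x y o π Q P) (hTGP : TGPFeasible x y o τ v u)
    (heq : τ * (∑ i, Q i + ∑ r, P r) = ∑ i, v i * x o i - ∑ r, u r * y o r) :
    (∀ π' Q' P', TSPFeasible x y o π' Q' P' →
      τ * (∑ i, Q' i + ∑ r, P' r) ≤ τ * (∑ i, Q i + ∑ r, P r)) ∧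
    (∀ v' u', TGPFeasible x y o τ v' u' →
      ∑ i, v i * x o i - ∑ r, u r * y o r ≤ ∑ i, v' i * x o i - ∑ r, u' r * y o r) := by
  constructor
  · intro π' Q' P' h
    have := weak_duality h hTGP
    linarith
  · intro v' u' h
    have := weak_duality hTSP h
    linarith
end

section
/- Complementary slackness on intensities (Eq. (21), PTE case): if (π, Q, P) is TSP-feasible, (v, u) is TGP-feasible for τ, and their objective values are equal, i.e. τ * (∑ i, Q i + ∑ r, P r) = ∑ i, v i * x o i - ∑ r, u r * y o r, then for every j, (∑ i, v i * x j i - ∑ r, u r * y j r) * π j = 0; in particular, π j > 0 implies ∑ i, v i * x j i = ∑ r, u r * y j r. -/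
open Finset

/-- Complementary slackness on intensities (Eq. (21), PTE case). -/
theorem complementary_slackness_intensities
    (n m s : ℕ) (x : Fin n → Fin m → ℝ) (y : Fin n → Fin s → ℝ) (o : Fin n)
    (hx : ∀ j i, 0 < x j i) (hy : ∀ j r, 0 < y j r)
    (τ : ℝ) (π : Fin n → ℝ) (Q : Fin m → ℝ) (P : Fin s → ℝ)
    (v : Fin m → ℝ) (u : Fin s → ℝ)
    (hTSP : TSPFeasible x y o π Q P) (hTGP : TGPFeasible x y o τ v u)
    (heq : τ * (∑ i, Q i + ∑ r, P r) = ∑ i, v i * x o i - ∑ r, u r * y o r) :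
    (∀ j, (∑ i, v i * x j i - ∑ r, u r * y j r) * π j = 0) ∧
    (∀ j, 0 < π j → ∑ i, v i * x j i = ∑ r, u r * y j r) := by

  obtain ⟨hπ, hQ, hP, hin, hout⟩ := hTSP
  obtain ⟨hgap, hv, hu⟩ := hTGP
  have hsum : ∑ j, (∑ i, v i * x j i - ∑ r, u r * y j r) * π j
      = (∑ i, v i * (∑ j, x j i * π j)) - ∑ r, u r * (∑ j, y j r * π j) := by
    simp only [sub_mul, Finset.sum_sub_distrib, Finset.sum_mul, Finset.mul_sum]
    rw [Finset.sum_comm, Finset.sum_comm (γ := Fin s)]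
    ring_nf
  have hsum2 : ∑ j, (∑ i, v i * x j i - ∑ r, u r * y j r) * π j
      = τ * (∑ i, Q i + ∑ r, P r)
        - ((∑ i, Q i * (x o i * v i)) + ∑ r, P r * (y o r * u r)) := by
    rw [hsum, heq]
    have h1 : ∀ i, ∑ j, x j i * π j = x o i - Q i * x o i := fun i => by
      have := hin i; linarith
    have h2 : ∀ r, ∑ j, y j r * π j = y o r + P r * y o r := fun r => by
      have := hout r; linarith [hout r]
    simp only [h1, h2]
    have e1 : ∑ i, v i * (x o i - Q i * x o i)
        = ∑ i, v i * x o i - ∑ i, Q i * (x o i * v i) := by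
      rw [← Finset.sum_sub_distrib]; exact Finset.sum_congr rfl fun i _ => by ring
    have e2 : ∑ r, u r * (y o r + P r * y o r)
        = ∑ r, u r * y o r + ∑ r, P r * (y o r * u r) := by
      rw [← Finset.sum_add_distrib]; exact Finset.sum_congr rfl fun r _ => by ring
    rw [e1, e2]; ring
  have hle : ∑ j, (∑ i, v i * x j i - ∑ r, u r * y j r) * π j ≤ 0 := by
    rw [hsum2]
    have hQb : τ * ∑ i, Q i ≤ ∑ i, Q i * (x o i * v i) := by
      rw [Finset.mul_sum]
      apply Finset.sum_le_sum
      intro i _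
      calc τ * Q i = Q i * τ := by ring
        _ ≤ Q i * (x o i * v i) := mul_le_mul_of_nonneg_left (hv i) (hQ i)
    have hPb : τ * ∑ r, P r ≤ ∑ r, P r * (y o r * u r) := by
      rw [Finset.mul_sum]
      apply Finset.sum_le_sum
      intro r _
      calc τ * P r = P r * τ := by ring
        _ ≤ P r * (y o r * u r) := mul_le_mul_of_nonneg_left (hu r) (hP r)
    nlinarith
  have hzero : ∀ j ∈ Finset.univ, (∑ i, v i * x j i - ∑ r, u r * y j r) * π j = 0 := by
    apply (Finset.sum_eq_zero_iff_of_nonneg ?_).mp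
    · exact le_antisymm hle (Finset.sum_nonneg fun j _ => mul_nonneg (hgap j) (hπ j))
    · exact fun j _ => mul_nonneg (hgap j) (hπ j)
  refine ⟨fun j => hzero j (Finset.mem_univ j), fun j hj => ?_⟩
  have := hzero j (Finset.mem_univ j)
  rcases mul_eq_zero.mp this with h | h
  · linarith
  · exact absurd h (ne_of_gt hj)
end

section
/- Complementary slackness on slacks (Eq. (22)): if (π, Q, P) is TSP-feasible, (v, u) is TGP-feasible for τ, and τ * (∑ i, Q i + ∑ r, P r) = ∑ i, v i * x o i - ∑ r, u r * y o r, then for every i, (v i * x o i - τ) * Q i = 0 and for every r, (u r * y o r - τ) * P r = 0; in particular Q i > 0 implies v i * x o i = τ, and P r > 0 implies u r * y o r = τ. -/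
open Finset

/-- Complementary slackness on slacks (Eq. (22)). -/
theorem complementary_slackness_slacks
    (n m s : ℕ) (x : Fin n → Fin m → ℝ) (y : Fin n → Fin s → ℝ) (o : Fin n)
    (hx : ∀ j i, 0 < x j i) (hy : ∀ j r, 0 < y j r)
    (τ : ℝ) (π : Fin n → ℝ) (Q : Fin m → ℝ) (P : Fin s → ℝ)
    (v : Fin m → ℝ) (u : Fin s → ℝ)
    (hTSP : TSPFeasible x y o π Q P) (hTGP : TGPFeasible x y o τ v u)
    (heq : τ * (∑ i, Q i + ∑ r, P r) = ∑ i, v i * x o i - ∑ r, u r * y o r) :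
    (∀ i, (v i * x o i - τ) * Q i = 0) ∧ (∀ r, (u r * y o r - τ) * P r = 0) ∧
    (∀ i, 0 < Q i → v i * x o i = τ) ∧ (∀ r, 0 < P r → u r * y o r = τ) := by
  obtain ⟨hπ, hQ, hP, hin, hout⟩ := hTSP
  obtain ⟨hgap, hv, hu⟩ := hTGP
  have hA : ∀ i, 0 ≤ (v i * x o i - τ) * Q i := fun i =>
    mul_nonneg (by have := hv i; rw [mul_comm] at this; linarith) (hQ i)
  have hB : ∀ r, 0 ≤ (u r * y o r - τ) * P r := fun r =>
    mul_nonneg (by have := hu r; rw [mul_comm] at this; linarith) (hP r)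
  have hSterm : ∀ j, 0 ≤ π j * (∑ i, v i * x j i - ∑ r, u r * y j r) := fun j =>
    mul_nonneg (hπ j) (hgap j)
  have h1 : ∀ i, (v i * x o i - τ) * Q i
      = v i * x o i - (∑ j, v i * (x j i * π j)) - τ * Q i := by
    intro i
    have h := hin i
    have h2 : v i * (Q i * x o i) = v i * x o i - ∑ j, v i * (x j i * π j) := by
      rw [← Finset.mul_sum, ← mul_sub]
      congr 1
      linarith
    have h3 : (v i * x o i - τ) * Q i = v i * (Q i * x o i) - τ * Q i := by ring
    rw [h3, h2]
  have h2 : ∀ r, (u r * y o r - τ) * P r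
      = (∑ j, u r * (y j r * π j)) - u r * y o r - τ * P r := by
    intro r
    have h := hout r
    have h2' : ∑ j, u r * (y j r * π j) = u r * y o r + u r * (P r * y o r) := by
      rw [← Finset.mul_sum, h]; ring
    have h3 : (u r * y o r - τ) * P r = u r * (P r * y o r) - τ * P r := by ring
    rw [h3]
    linarith
  have hswapx : ∑ i, ∑ j, v i * (x j i * π j)
      = ∑ j, ∑ i, π j * (v i * x j i) := by
    rw [Finset.sum_comm]
    exact Finset.sum_congr rfl fun j _ => Finset.sum_congr rfl fun i _ => by ring
  have hswapy : ∑ r, ∑ j, u r * (y j r * π j)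
      = ∑ j, ∑ r, π j * (u r * y j r) := by
    rw [Finset.sum_comm]
    exact Finset.sum_congr rfl fun j _ => Finset.sum_congr rfl fun r _ => by ring
  have hS : ∑ j, π j * (∑ i, v i * x j i - ∑ r, u r * y j r)
      = (∑ i, ∑ j, v i * (x j i * π j)) - ∑ r, ∑ j, u r * (y j r * π j) := by
    rw [hswapx, hswapy, ← Finset.sum_sub_distrib]
    refine Finset.sum_congr rfl fun j _ => ?_
    rw [mul_sub, Finset.mul_sum, Finset.mul_sum]
  have key : (∑ i, (v i * x o i - τ) * Q i) + (∑ r, (u r * y o r - τ) * P r)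
      + (∑ j, π j * (∑ i, v i * x j i - ∑ r, u r * y j r)) = 0 := by
    have e1 : ∑ i, (v i * x o i - τ) * Q i
        = (∑ i, v i * x o i) - (∑ i, ∑ j, v i * (x j i * π j)) - τ * ∑ i, Q i := by
      rw [Finset.sum_congr rfl fun i _ => h1 i]
      rw [Finset.sum_sub_distrib, Finset.sum_sub_distrib, Finset.mul_sum]
    have e2 : ∑ r, (u r * y o r - τ) * P r
        = (∑ r, ∑ j, u r * (y j r * π j)) - (∑ r, u r * y o r) - τ * ∑ r, P r := by
      rw [Finset.sum_congr rfl fun r _ => h2 r]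
      rw [Finset.sum_sub_distrib, Finset.sum_sub_distrib, Finset.mul_sum]
    rw [e1, e2, hS]
    have := heq
    ring_nf
    ring_nf at this
    linarith
  have hAz : ∑ i, (v i * x o i - τ) * Q i = 0 := by
    have h01 : 0 ≤ ∑ i, (v i * x o i - τ) * Q i := Finset.sum_nonneg fun i _ => hA i
    have h02 : 0 ≤ ∑ r, (u r * y o r - τ) * P r := Finset.sum_nonneg fun r _ => hB r
    have h03 : 0 ≤ ∑ j, π j * (∑ i, v i * x j i - ∑ r, u r * y j r) :=
      Finset.sum_nonneg fun j _ => hSterm j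
    linarith
  have hBz : ∑ r, (u r * y o r - τ) * P r = 0 := by
    have h01 : 0 ≤ ∑ i, (v i * x o i - τ) * Q i := Finset.sum_nonneg fun i _ => hA i
    have h02 : 0 ≤ ∑ r, (u r * y o r - τ) * P r := Finset.sum_nonneg fun r _ => hB r
    have h03 : 0 ≤ ∑ j, π j * (∑ i, v i * x j i - ∑ r, u r * y j r) :=
      Finset.sum_nonneg fun j _ => hSterm j
    linarith
  have hAi : ∀ i, (v i * x o i - τ) * Q i = 0 := fun i =>
    (Finset.sum_eq_zero_iff_of_nonneg (fun i _ => hA i)).mp hAz i (Finset.mem_univ i)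
  have hBr : ∀ r, (u r * y o r - τ) * P r = 0 := fun r =>
    (Finset.sum_eq_zero_iff_of_nonneg (fun r _ => hB r)).mp hBz r (Finset.mem_univ r)
  refine ⟨hAi, hBr, fun i hQi => ?_, fun r hPr => ?_⟩
  · rcases mul_eq_zero.mp (hAi i) with h | h
    · linarith
    · exact absurd h (ne_of_gt hQi)
  · rcases mul_eq_zero.mp (hBr r) with h | h
    · linarith
    · exact absurd h (ne_of_gt hPr)
end

section
/- The relative boundary efficiency of the benchmark equals 1 (Criterion (ii), PTE case): if (π, Q, P) is TSP-feasible, (v, u) is TGP-feasible for τ, and τ * (∑ i, Q i + ∑ r, P r) = ∑ i, v i * x o i - ∑ r, u r * y o r, then the benchmark targets x̂ i = x o i * (1 - Q i) and ŷ r = y o r * (1 + P r) satisfy ∑ i, v i * x̂ i = ∑ r, u r * ŷ r. -/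
open Finset

/-- The relative boundary efficiency of the benchmark equals 1 (Criterion (ii)). -/
theorem benchmark_boundary_efficiency
    (n m s : ℕ) (x : Fin n → Fin m → ℝ) (y : Fin n → Fin s → ℝ) (o : Fin n)
    (hx : ∀ j i, 0 < x j i) (hy : ∀ j r, 0 < y j r)
    (τ : ℝ) (π : Fin n → ℝ) (Q : Fin m → ℝ) (P : Fin s → ℝ)
    (v : Fin m → ℝ) (u : Fin s → ℝ)
    (hTSP : TSPFeasible x y o π Q P) (hTGP : TGPFeasible x y o τ v u)
    (heq : τ * (∑ i, Q i + ∑ r, P r) = ∑ i, v i * x o i - ∑ r, u r * y o r) :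
    ∑ i, v i * (x o i * (1 - Q i)) = ∑ r, u r * (y o r * (1 + P r)) := by

  obtain ⟨hπ, hQ, hP, hin, hout⟩ := hTSP
  obtain ⟨hgap, hv, hu⟩ := hTGP
  have hA : ∀ i, x o i * (1 - Q i) = ∑ j, x j i * π j := fun i => by
    have := hin i; ring_nf; ring_nf at this; linarith
  have hB : ∀ r, y o r * (1 + P r) = ∑ j, y j r * π j := fun r => by
    have := hout r; linarith [this]
  have hAsum : ∑ i, v i * (x o i * (1 - Q i)) = ∑ j, π j * ∑ i, v i * x j i := by
    simp only [hA, Finset.mul_sum]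
    rw [Finset.sum_comm]
    exact Finset.sum_congr rfl fun j _ => Finset.sum_congr rfl fun i _ => by ring
  have hBsum : ∑ r, u r * (y o r * (1 + P r)) = ∑ j, π j * ∑ r, u r * y j r := by
    simp only [hB, Finset.mul_sum]
    rw [Finset.sum_comm]
    exact Finset.sum_congr rfl fun j _ => Finset.sum_congr rfl fun r _ => by ring
  have key : ∑ i, v i * (x o i * (1 - Q i)) - ∑ r, u r * (y o r * (1 + P r))
      = ∑ j, π j * (∑ i, v i * x j i - ∑ r, u r * y j r) := by
    rw [hAsum, hBsum, ← Finset.sum_sub_distrib]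
    exact Finset.sum_congr rfl fun j _ => by ring
  have hge : 0 ≤ ∑ i, v i * (x o i * (1 - Q i)) - ∑ r, u r * (y o r * (1 + P r)) := by
    rw [key]
    exact Finset.sum_nonneg fun j _ => mul_nonneg (hπ j) (hgap j)
  have hA2 : ∑ i, v i * (x o i * (1 - Q i)) = ∑ i, v i * x o i - ∑ i, v i * x o i * Q i := by
    rw [← Finset.sum_sub_distrib]
    exact Finset.sum_congr rfl fun i _ => by ring
  have hB2 : ∑ r, u r * (y o r * (1 + P r)) = ∑ r, u r * y o r + ∑ r, u r * y o r * P r := by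
    rw [← Finset.sum_add_distrib]
    exact Finset.sum_congr rfl fun r _ => by ring
  have h2 : ∑ i, τ * Q i ≤ ∑ i, v i * x o i * Q i :=
    Finset.sum_le_sum fun i _ => by nlinarith [hv i, hQ i]
  have h3 : ∑ r, τ * P r ≤ ∑ r, u r * y o r * P r :=
    Finset.sum_le_sum fun r _ => by nlinarith [hu r, hP r]
  have e2 : τ * ∑ i, Q i = ∑ i, τ * Q i := Finset.mul_sum _ _ _
  have e3 : τ * ∑ r, P r = ∑ r, τ * P r := Finset.mul_sum _ _ _
  have hle : ∑ i, v i * (x o i * (1 - Q i)) - ∑ r, u r * (y o r * (1 + P r)) ≤ 0 := by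
    rw [hA2, hB2]
    nlinarith [h2, h3, heq, e2, e3]
  linarith
end

section
/- Weak duality for the STE program: for any τ : ℝ and κ : ℝ, any STE-primal-feasible (π, Q, P) (i.e., TSP-feasible with ∑ j, π j = κ) and any STE-dual-feasible (v, u, w) for τ satisfy τ * (∑ i, Q i + ∑ r, P r) ≤ ∑ i, v i * x o i - ∑ r, u r * y o r + κ * w. -/
open Finset

/-- STE-primal-feasibility: TSP-feasible plus the sum-of-intensities condition. -/
def STEPrimalFeasible {n m s : ℕ} (x : Fin n → Fin m → ℝ) (y : Fin n → Fin s → ℝ)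
    (o : Fin n) (κ : ℝ) (π : Fin n → ℝ) (Q : Fin m → ℝ) (P : Fin s → ℝ) : Prop :=
  TSPFeasible x y o π Q P ∧ ∑ j, π j = κ

/-- STE-dual-feasibility for `τ`. -/
def STEDualFeasible {n m s : ℕ} (x : Fin n → Fin m → ℝ) (y : Fin n → Fin s → ℝ)
    (o : Fin n) (τ : ℝ) (v : Fin m → ℝ) (u : Fin s → ℝ) (w : ℝ) : Prop :=
  (∀ j, 0 ≤ ∑ i, v i * x j i - ∑ r, u r * y j r + w) ∧
  (∀ i, τ ≤ x o i * v i) ∧ (∀ r, τ ≤ y o r * u r)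

/-- Weak duality for the STE program. -/
theorem ste_weak_duality
    (n m s : ℕ) (x : Fin n → Fin m → ℝ) (y : Fin n → Fin s → ℝ) (o : Fin n)
    (hx : ∀ j i, 0 < x j i) (hy : ∀ j r, 0 < y j r)
    (τ κ : ℝ) (π : Fin n → ℝ) (Q : Fin m → ℝ) (P : Fin s → ℝ)
    (v : Fin m → ℝ) (u : Fin s → ℝ) (w : ℝ)
    (hP : STEPrimalFeasible x y o κ π Q P)
    (hD : STEDualFeasible x y o τ v u w) :
    τ * (∑ i, Q i + ∑ r, P r) ≤ ∑ i, v i * x o i - ∑ r, u r * y o r + κ * w := by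
  obtain ⟨⟨hπ0, hQ0, hP0, hxc, hyc⟩, hκ⟩ := hP
  obtain ⟨hgap, hv, hu⟩ := hD
  have h1 : ∑ i, v i * x o i
      = (∑ j, π j * ∑ i, v i * x j i) + ∑ i, Q i * (x o i * v i) := by
    have e : ∀ i, v i * x o i = (∑ j, v i * (x j i * π j)) + Q i * (x o i * v i) := by
      intro i
      rw [← Finset.mul_sum]
      linear_combination (-(v i)) * (hxc i)
    rw [Finset.sum_congr rfl fun i _ => e i, Finset.sum_add_distrib, Finset.sum_comm]
    congr 1
    apply Finset.sum_congr rfl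
    intro j _
    rw [Finset.mul_sum]
    apply Finset.sum_congr rfl
    intro i _
    ring
  have h2 : ∑ r, u r * y o r
      = (∑ j, π j * ∑ r, u r * y j r) - ∑ r, P r * (y o r * u r) := by
    have e : ∀ r, u r * y o r = (∑ j, u r * (y j r * π j)) - P r * (y o r * u r) := by
      intro r
      rw [← Finset.mul_sum]
      linear_combination (-(u r)) * (hyc r)
    rw [Finset.sum_congr rfl fun r _ => e r, Finset.sum_sub_distrib, Finset.sum_comm]
    congr 1
    apply Finset.sum_congr rfl
    intro j _
    rw [Finset.mul_sum]
    apply Finset.sum_congr rfl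
    intro r _
    ring
  have hw : κ * w = ∑ j, π j * w := by rw [← hκ, Finset.sum_mul]
  have key : ∑ i, v i * x o i - ∑ r, u r * y o r + κ * w
      = (∑ j, π j * ((∑ i, v i * x j i) - (∑ r, u r * y j r) + w))
        + ∑ i, Q i * (x o i * v i) + ∑ r, P r * (y o r * u r) := by
    rw [h1, h2, hw,
      Finset.sum_congr rfl (fun j _ => by
        ring : ∀ j ∈ Finset.univ, π j * ((∑ i, v i * x j i) - (∑ r, u r * y j r) + w)
          = π j * ∑ i, v i * x j i - π j * ∑ r, u r * y j r + π j * w),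
      Finset.sum_add_distrib, Finset.sum_sub_distrib]
    ring
  rw [key]
  have hA : 0 ≤ ∑ j, π j * ((∑ i, v i * x j i) - (∑ r, u r * y j r) + w) :=
    Finset.sum_nonneg fun j _ => mul_nonneg (hπ0 j) (hgap j)
  have hB : ∑ i, τ * Q i ≤ ∑ i, Q i * (x o i * v i) :=
    Finset.sum_le_sum fun i _ => by
      rw [mul_comm]
      exact mul_le_mul_of_nonneg_left (hv i) (hQ0 i)
  have hC : ∑ r, τ * P r ≤ ∑ r, P r * (y o r * u r) :=
    Finset.sum_le_sum fun r _ => by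
      rw [mul_comm]
      exact mul_le_mul_of_nonneg_left (hu r) (hP0 r)
  have hB' : τ * ∑ i, Q i = ∑ i, τ * Q i := Finset.mul_sum _ _ _
  have hC' : τ * ∑ r, P r = ∑ r, τ * P r := Finset.mul_sum _ _ _
  linarith
end

section
/- Complementary slackness on intensities for the STE program (Eq. (21), STE case): if (π, Q, P) is STE-primal-feasible for κ, (v, u, w) is STE-dual-feasible for τ, and their objective values are equal, i.e. τ * (∑ i, Q i + ∑ r, P r) = ∑ i, v i * x o i - ∑ r, u r * y o r + κ * w, then for every j, (∑ i, v i * x j i - ∑ r, u r * y j r + w) * π j = 0; in particular, π j > 0 implies ∑ i, v i * x j i - ∑ r, u r * y j r + w = 0. -/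
open Finset

/-- Complementary slackness on intensities for the STE program (Eq. (21), STE case). -/
theorem ste_complementary_slackness_intensities
    (n m s : ℕ) (x : Fin n → Fin m → ℝ) (y : Fin n → Fin s → ℝ) (o : Fin n)
    (hx : ∀ j i, 0 < x j i) (hy : ∀ j r, 0 < y j r)
    (τ κ : ℝ) (π : Fin n → ℝ) (Q : Fin m → ℝ) (P : Fin s → ℝ)
    (v : Fin m → ℝ) (u : Fin s → ℝ) (w : ℝ)
    (hP : STEPrimalFeasible x y o κ π Q P)
    (hD : STEDualFeasible x y o τ v u w)
    (heq : τ * (∑ i, Q i + ∑ r, P r)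
      = ∑ i, v i * x o i - ∑ r, u r * y o r + κ * w) :
    (∀ j, (∑ i, v i * x j i - ∑ r, u r * y j r + w) * π j = 0) ∧
    (∀ j, 0 < π j → ∑ i, v i * x j i - ∑ r, u r * y j r + w = 0) := by
  obtain ⟨⟨hπ, hQ, hPn, hin, hout⟩, hκ⟩ := hP
  obtain ⟨hgap, hv, hu⟩ := hD
  have h1 : ∀ i, ∑ j, x j i * π j = x o i - Q i * x o i := fun i => by
    have := hin i; linarith
  have hA : ∑ j, (∑ i, v i * x j i) * π j
      = ∑ i, v i * (x o i - Q i * x o i) := by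
    simp only [Finset.sum_mul]
    rw [Finset.sum_comm]
    refine Finset.sum_congr rfl fun i _ => ?_
    rw [← h1 i, Finset.mul_sum]
    exact Finset.sum_congr rfl fun j _ => by ring
  have hB : ∑ j, (∑ r, u r * y j r) * π j
      = ∑ r, u r * ((1 + P r) * y o r) := by
    simp only [Finset.sum_mul]
    rw [Finset.sum_comm]
    refine Finset.sum_congr rfl fun r _ => ?_
    rw [← hout r, Finset.mul_sum]
    exact Finset.sum_congr rfl fun j _ => by ring
  have hW : ∑ j, w * π j = w * κ := by rw [← Finset.mul_sum, hκ]
  have key : ∑ j, (∑ i, v i * x j i - ∑ r, u r * y j r + w) * π j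
      = ∑ i, Q i * (τ - x o i * v i) + ∑ r, P r * (τ - y o r * u r) := by
    have expand : ∑ j, (∑ i, v i * x j i - ∑ r, u r * y j r + w) * π j
        = (∑ j, (∑ i, v i * x j i) * π j) - (∑ j, (∑ r, u r * y j r) * π j)
          + ∑ j, w * π j := by
      rw [← Finset.sum_sub_distrib, ← Finset.sum_add_distrib]
      exact Finset.sum_congr rfl fun j _ => by ring
    rw [expand, hA, hB, hW]
    have e1 : ∑ i, v i * (x o i - Q i * x o i)
        = (∑ i, v i * x o i) - ∑ i, Q i * (x o i * v i) := by
      rw [← Finset.sum_sub_distrib]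
      exact Finset.sum_congr rfl fun i _ => by ring
    have e2 : ∑ r, u r * ((1 + P r) * y o r)
        = (∑ r, u r * y o r) + ∑ r, P r * (y o r * u r) := by
      rw [← Finset.sum_add_distrib]
      exact Finset.sum_congr rfl fun r _ => by ring
    have e3 : ∑ i, Q i * (τ - x o i * v i)
        = τ * (∑ i, Q i) - ∑ i, Q i * (x o i * v i) := by
      rw [Finset.mul_sum, ← Finset.sum_sub_distrib]
      exact Finset.sum_congr rfl fun i _ => by ring
    have e4 : ∑ r, P r * (τ - y o r * u r)
        = τ * (∑ r, P r) - ∑ r, P r * (y o r * u r) := by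
      rw [Finset.mul_sum, ← Finset.sum_sub_distrib]
      exact Finset.sum_congr rfl fun r _ => by ring
    rw [e1, e2, e3, e4, mul_comm w κ]
    rw [mul_add] at heq
    linarith [heq]
  have hterm : ∀ j ∈ Finset.univ,
      0 ≤ (∑ i, v i * x j i - ∑ r, u r * y j r + w) * π j := fun j _ =>
    mul_nonneg (hgap j) (hπ j)
  have hle : ∑ j, (∑ i, v i * x j i - ∑ r, u r * y j r + w) * π j ≤ 0 := by
    rw [key]
    have d1 : ∑ i, Q i * (τ - x o i * v i) ≤ 0 :=
      Finset.sum_nonpos fun i _ =>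
        mul_nonpos_of_nonneg_of_nonpos (hQ i) (by linarith [hv i])
    have d2 : ∑ r, P r * (τ - y o r * u r) ≤ 0 :=
      Finset.sum_nonpos fun r _ =>
        mul_nonpos_of_nonneg_of_nonpos (hPn r) (by linarith [hu r])
    linarith
  have hsum0 : ∑ j, (∑ i, v i * x j i - ∑ r, u r * y j r + w) * π j = 0 :=
    le_antisymm hle (Finset.sum_nonneg hterm)
  have hall : ∀ j, (∑ i, v i * x j i - ∑ r, u r * y j r + w) * π j = 0 :=
    fun j => (Finset.sum_eq_zero_iff_of_nonneg hterm).mp hsum0 j (Finset.mem_univ j)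
  refine ⟨hall, fun j hj => ?_⟩
  rcases mul_eq_zero.mp (hall j) with h | h
  · exact h
  · exact absurd h (ne_of_gt hj)
end

section
/- The relative boundary efficiency of the benchmark equals 1 for the STE program (Criterion (ii), STE case): if (π, Q, P) is STE-primal-feasible for κ, (v, u, w) is STE-dual-feasible for τ, and τ * (∑ i, Q i + ∑ r, P r) = ∑ i, v i * x o i - ∑ r, u r * y o r + κ * w, then the benchmark targets x̂ i = x o i * (1 - Q i) and ŷ r = y o r * (1 + P r) satisfy ∑ i, v i * x̂ i - ∑ r, u r * ŷ r + κ * w = 0. -/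
open Finset

/-- The relative boundary efficiency of the benchmark equals 1 (Criterion (ii), STE case). -/
theorem ste_benchmark_boundary_efficiency
    (n m s : ℕ) (x : Fin n → Fin m → ℝ) (y : Fin n → Fin s → ℝ) (o : Fin n)
    (hx : ∀ j i, 0 < x j i) (hy : ∀ j r, 0 < y j r)
    (τ κ : ℝ) (π : Fin n → ℝ) (Q : Fin m → ℝ) (P : Fin s → ℝ)
    (v : Fin m → ℝ) (u : Fin s → ℝ) (w : ℝ)
    (hP : STEPrimalFeasible x y o κ π Q P)
    (hD : STEDualFeasible x y o τ v u w)
    (heq : τ * (∑ i, Q i + ∑ r, P r)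
      = ∑ i, v i * x o i - ∑ r, u r * y o r + κ * w) :
    ∑ i, v i * (x o i * (1 - Q i)) - ∑ r, u r * (y o r * (1 + P r)) + κ * w = 0 := by
  obtain ⟨⟨hπ, hQ, hPnn, hin, hout⟩, hκ⟩ := hP
  obtain ⟨hgap, hv, hu⟩ := hD
  have hxin : ∀ i, x o i * (1 - Q i) = ∑ j, x j i * π j := by
    intro i; have := hin i; ring_nf; ring_nf at this; linarith
  have hyout : ∀ r, y o r * (1 + P r) = ∑ j, y j r * π j := by
    intro r; have := hout r; linarith [this]
  have key : ∀ j, π j * (∑ i, v i * x j i - ∑ r, u r * y j r + w)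
      = (∑ i, v i * (x j i * π j)) - (∑ r, u r * (y j r * π j)) + π j * w := by
    intro j
    rw [mul_add, mul_sub, Finset.mul_sum, Finset.mul_sum]
    congr 2
    · exact Finset.sum_congr rfl fun i _ => by ring
    · exact Finset.sum_congr rfl fun r _ => by ring
  have ein : ∑ i, v i * (x o i * (1 - Q i)) = ∑ j, ∑ i, v i * (x j i * π j) := by
    rw [Finset.sum_comm]
    exact Finset.sum_congr rfl fun i _ => by rw [hxin i, Finset.mul_sum]
  have eout : ∑ r, u r * (y o r * (1 + P r)) = ∑ j, ∑ r, u r * (y j r * π j) := by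
    rw [Finset.sum_comm]
    exact Finset.sum_congr rfl fun r _ => by rw [hyout r, Finset.mul_sum]
  have h1 : ∑ i, v i * (x o i * (1 - Q i)) - ∑ r, u r * (y o r * (1 + P r)) + κ * w
      = ∑ j, π j * (∑ i, v i * x j i - ∑ r, u r * y j r + w) := by
    rw [ein, eout, ← hκ, Finset.sum_mul, ← Finset.sum_sub_distrib, ← Finset.sum_add_distrib]
    exact Finset.sum_congr rfl fun j _ => (key j).symm
  have h2 : ∑ i, v i * (x o i * (1 - Q i)) - ∑ r, u r * (y o r * (1 + P r)) + κ * w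
      = τ * (∑ i, Q i + ∑ r, P r)
        - (∑ i, v i * x o i * Q i + ∑ r, u r * y o r * P r) := by
    rw [heq]
    simp only [mul_sub, mul_add, mul_one, Finset.sum_sub_distrib, Finset.sum_add_distrib]
    ring_nf
  have hge : 0 ≤ ∑ j, π j * (∑ i, v i * x j i - ∑ r, u r * y j r + w) :=
    Finset.sum_nonneg fun j _ => mul_nonneg (hπ j) (hgap j)
  have hle : τ * (∑ i, Q i + ∑ r, P r)
      ≤ ∑ i, v i * x o i * Q i + ∑ r, u r * y o r * P r := by
    rw [mul_add, Finset.mul_sum, Finset.mul_sum]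
    refine add_le_add (Finset.sum_le_sum fun i _ => ?_) (Finset.sum_le_sum fun r _ => ?_)
    · calc τ * Q i ≤ x o i * v i * Q i := mul_le_mul_of_nonneg_right (hv i) (hQ i)
        _ = v i * x o i * Q i := by ring
    · calc τ * P r ≤ y o r * u r * P r := mul_le_mul_of_nonneg_right (hu r) (hPnn r)
        _ = u r * y o r * P r := by ring
  linarith [h1 ▸ hge, h2]
end

section
/- Non-peers get zero intensity: if τ > 0, (π, Q, P) is TSP-feasible, (v, u) is TGP-feasible for τ with equal objective values τ * (∑ i, Q i + ∑ r, P r) = ∑ i, v i * x o i - ∑ r, u r * y o r, and a unit j₀ lies strictly below the best efficiency boundary under (v, u), i.e. ∑ i, v i * x j₀ i - ∑ r, u r * y j₀ r > 0, then π j₀ = 0. -/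
open Finset

/-- Non-peers get zero intensity. -/
theorem non_peer_zero_intensity
    (n m s : ℕ) (x : Fin n → Fin m → ℝ) (y : Fin n → Fin s → ℝ) (o : Fin n)
    (hx : ∀ j i, 0 < x j i) (hy : ∀ j r, 0 < y j r)
    (τ : ℝ) (hτ : 0 < τ) (π : Fin n → ℝ) (Q : Fin m → ℝ) (P : Fin s → ℝ)
    (v : Fin m → ℝ) (u : Fin s → ℝ)
    (hTSP : TSPFeasible x y o π Q P) (hTGP : TGPFeasible x y o τ v u)
    (heq : τ * (∑ i, Q i + ∑ r, P r) = ∑ i, v i * x o i - ∑ r, u r * y o r)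
    (j₀ : Fin n) (hj₀ : 0 < ∑ i, v i * x j₀ i - ∑ r, u r * y j₀ r) :
    π j₀ = 0 := by
  obtain ⟨hπ, hQ, hP, hin, hout⟩ := hTSP
  obtain ⟨hgap, hv, hu⟩ := hTGP
  set g : Fin n → ℝ := fun j => ∑ i, v i * x j i - ∑ r, u r * y j r with hg
  have key : ∑ j, π j * g j
      = (∑ i, v i * x o i - ∑ r, u r * y o r)
        - (∑ i, Q i * (v i * x o i)) - (∑ r, P r * (u r * y o r)) := by
    have h1 : ∑ j, π j * (∑ i, v i * x j i)
        = ∑ i, v i * (x o i - Q i * x o i) := by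
      calc ∑ j, π j * (∑ i, v i * x j i)
          = ∑ j, ∑ i, v i * (x j i * π j) := by
            apply Finset.sum_congr rfl; intro j _
            rw [Finset.mul_sum]; apply Finset.sum_congr rfl; intro i _; ring
        _ = ∑ i, v i * (∑ j, x j i * π j) := by
            rw [Finset.sum_comm]
            apply Finset.sum_congr rfl; intro i _; rw [Finset.mul_sum]
        _ = ∑ i, v i * (x o i - Q i * x o i) := by
            apply Finset.sum_congr rfl; intro i _
            have := hin i; congr 1; linarith
    have h2 : ∑ j, π j * (∑ r, u r * y j r)
        = ∑ r, u r * ((1 + P r) * y o r) := by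
      calc ∑ j, π j * (∑ r, u r * y j r)
          = ∑ j, ∑ r, u r * (y j r * π j) := by
            apply Finset.sum_congr rfl; intro j _
            rw [Finset.mul_sum]; apply Finset.sum_congr rfl; intro r _; ring
        _ = ∑ r, u r * (∑ j, y j r * π j) := by
            rw [Finset.sum_comm]
            apply Finset.sum_congr rfl; intro r _; rw [Finset.mul_sum]
        _ = ∑ r, u r * ((1 + P r) * y o r) := by
            apply Finset.sum_congr rfl; intro r _; rw [hout r]
    have : ∑ j, π j * g j = (∑ j, π j * (∑ i, v i * x j i)) - ∑ j, π j * (∑ r, u r * y j r) := by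
      rw [← Finset.sum_sub_distrib]
      apply Finset.sum_congr rfl; intro j _; simp [hg]; ring
    rw [this, h1, h2]
    have e1 : ∑ i, v i * (x o i - Q i * x o i)
        = ∑ i, v i * x o i - ∑ i, Q i * (v i * x o i) := by
      rw [← Finset.sum_sub_distrib]
      apply Finset.sum_congr rfl; intro i _; ring
    have e2 : ∑ r, u r * ((1 + P r) * y o r)
        = ∑ r, u r * y o r + ∑ r, P r * (u r * y o r) := by
      rw [← Finset.sum_add_distrib]
      apply Finset.sum_congr rfl; intro r _; ring
    rw [e1, e2]; ring
  have hle : ∑ j, π j * g j ≤ 0 := by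
    rw [key, ← heq]
    have hQsum : ∑ i, τ * Q i ≤ ∑ i, Q i * (v i * x o i) := by
      apply Finset.sum_le_sum; intro i _
      rw [mul_comm τ (Q i)]
      exact mul_le_mul_of_nonneg_left (by have := hv i; linarith [mul_comm (x o i) (v i)]) (hQ i)
    have hPsum : ∑ r, τ * P r ≤ ∑ r, P r * (u r * y o r) := by
      apply Finset.sum_le_sum; intro r _
      rw [mul_comm τ (P r)]
      exact mul_le_mul_of_nonneg_left (by have := hu r; linarith [mul_comm (y o r) (u r)]) (hP r)
    have e1 : ∑ i, τ * Q i = τ * ∑ i, Q i := by rw [Finset.mul_sum]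
    have e2 : ∑ r, τ * P r = τ * ∑ r, P r := by rw [Finset.mul_sum]
    nlinarith [hQsum, hPsum]
  have hnn : ∀ j ∈ Finset.univ, 0 ≤ π j * g j := fun j _ =>
    mul_nonneg (hπ j) (hgap j)
  have hzero : ∑ j, π j * g j = 0 :=
    le_antisymm hle (Finset.sum_nonneg hnn)
  have := (Finset.sum_eq_zero_iff_of_nonneg hnn).mp hzero j₀ (Finset.mem_univ j₀)
  have hgj : g j₀ ≠ 0 := ne_of_gt hj₀
  exact (mul_eq_zero.mp this).resolve_right hgj
end

section
/- Efficient units have zero slacks and best return to practice equal to 1: if τ > 0 and there exists a TGP-feasible pair (v, u) for τ with zero total gap price, i.e. ∑ i, v i * x o i = ∑ r, u r * y o r, then every TSP-feasible triple (π, Q, P) satisfies Q i = 0 for all i and P r = 0 for all r, so that ∑ j, x j i * π j = x o i for every i and ∑ j, y j r * π j = y o r for every r; in particular the benchmark targets x̂ i = x o i * (1 - Q i) and ŷ r = y o r * (1 + P r) equal the observed values of unit o. -/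
open Finset

/-- Efficient units have zero slacks and best return to practice equal to 1. -/
theorem efficient_unit_zero_slacks
    (n m s : ℕ) (x : Fin n → Fin m → ℝ) (y : Fin n → Fin s → ℝ) (o : Fin n)
    (hx : ∀ j i, 0 < x j i) (hy : ∀ j r, 0 < y j r)
    (τ : ℝ) (hτ : 0 < τ) (v : Fin m → ℝ) (u : Fin s → ℝ)
    (hTGP : TGPFeasible x y o τ v u)
    (hzero : ∑ i, v i * x o i = ∑ r, u r * y o r) :
    ∀ π Q P, TSPFeasible x y o π Q P →
      (∀ i, Q i = 0) ∧ (∀ r, P r = 0) ∧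
      (∀ i, ∑ j, x j i * π j = x o i) ∧ (∀ r, ∑ j, y j r * π j = y o r) ∧
      (∀ i, x o i * (1 - Q i) = x o i) ∧ (∀ r, y o r * (1 + P r) = y o r) := by
  obtain ⟨hgap, hvτ, huτ⟩ := hTGP
  intro π Q P hTSP
  obtain ⟨hπ, hQ, hP, hin, hout⟩ := hTSP
  have hA : 0 ≤ ∑ j, π j * (∑ i, v i * x j i - ∑ r, u r * y j r) :=
    Finset.sum_nonneg fun j _ => mul_nonneg (hπ j) (hgap j)
  have hswapx : ∑ j, π j * (∑ i, v i * x j i) = ∑ i, v i * (∑ j, x j i * π j) := by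
    simp only [Finset.mul_sum]
    rw [Finset.sum_comm]
    exact Finset.sum_congr rfl fun i _ => Finset.sum_congr rfl fun j _ => by ring
  have hswapy : ∑ j, π j * (∑ r, u r * y j r) = ∑ r, u r * (∑ j, y j r * π j) := by
    simp only [Finset.mul_sum]
    rw [Finset.sum_comm]
    exact Finset.sum_congr rfl fun r _ => Finset.sum_congr rfl fun j _ => by ring
  have hrw : ∑ j, π j * (∑ i, v i * x j i - ∑ r, u r * y j r)
      = (∑ i, v i * (∑ j, x j i * π j)) - ∑ r, u r * (∑ j, y j r * π j) := by
    rw [← hswapx, ← hswapy, ← Finset.sum_sub_distrib]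
    exact Finset.sum_congr rfl fun j _ => by ring
  have hxval : ∑ i, v i * (∑ j, x j i * π j)
      = (∑ i, v i * x o i) - ∑ i, Q i * (x o i * v i) := by
    rw [← Finset.sum_sub_distrib]
    refine Finset.sum_congr rfl fun i _ => ?_
    have h : ∑ j, x j i * π j = x o i - Q i * x o i := by linarith [hin i]
    rw [h]; ring
  have hyval : ∑ r, u r * (∑ j, y j r * π j)
      = (∑ r, u r * y o r) + ∑ r, P r * (y o r * u r) := by
    rw [← Finset.sum_add_distrib]
    refine Finset.sum_congr rfl fun r _ => ?_
    rw [hout r]; ring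
  have hkey : (∑ i, Q i * (x o i * v i)) + ∑ r, P r * (y o r * u r) ≤ 0 := by
    have := hA
    rw [hrw, hxval, hyval, hzero] at this
    linarith
  have hQn : ∀ i ∈ Finset.univ, 0 ≤ Q i * (x o i * v i) := fun i _ =>
    mul_nonneg (hQ i) (le_trans hτ.le (hvτ i))
  have hPn : ∀ r ∈ Finset.univ, 0 ≤ P r * (y o r * u r) := fun r _ =>
    mul_nonneg (hP r) (le_trans hτ.le (huτ r))
  have hQsum : ∑ i, Q i * (x o i * v i) = 0 := by
    have h1 := Finset.sum_nonneg hQn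
    have h2 := Finset.sum_nonneg hPn
    linarith
  have hPsum : ∑ r, P r * (y o r * u r) = 0 := by
    have h1 := Finset.sum_nonneg hQn
    have h2 := Finset.sum_nonneg hPn
    linarith
  have hQ0 : ∀ i, Q i = 0 := by
    intro i
    have := (Finset.sum_eq_zero_iff_of_nonneg hQn).mp hQsum i (Finset.mem_univ i)
    have hpos : 0 < x o i * v i := lt_of_lt_of_le hτ (hvτ i)
    exact (mul_eq_zero.mp this).resolve_right (ne_of_gt hpos)
  have hP0 : ∀ r, P r = 0 := by
    intro r
    have := (Finset.sum_eq_zero_iff_of_nonneg hPn).mp hPsum r (Finset.mem_univ r)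
    have hpos : 0 < y o r * u r := lt_of_lt_of_le hτ (huτ r)
    exact (mul_eq_zero.mp this).resolve_right (ne_of_gt hpos)
  refine ⟨hQ0, hP0, ?_, ?_, ?_, ?_⟩
  · intro i; have := hin i; rw [hQ0 i] at this; linarith
  · intro r; have := hout r; rw [hP0 r] at this; linarith
  · intro i; rw [hQ0 i]; ring
  · intro r; rw [hP0 r]; ring
end
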